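/- With U and V as defined, for every integer n ≥ 1, every integer k ≥ 0, and every real x > 0: U(x;n,k) + V(x;n,k) = ((log(n/x))^{2k}/((2k)!√n) - ∫_n^{n+1} (log(z/x))^{2k}/((2k)!√z) dz) + (∫_n^{n+1} (log(z/x))^{2k+2}/((2k+2)!·4√z) dz - (log((n+1)/x))^{2k+2}/((2k+2)!·4√(n+1))). -/

import Mathlib

open Real intervalIntegral



noncomputable def U (x n : ℝ) (k : ℕ) : ℝ :=
  (Real.log (x / n)) ^ (2 * k) / (Nat.factorial (2 * k) * Real.sqrt n)
    - (Real.sqrt n / 2) *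
      ((Real.log (x / n)) ^ (2 * k + 2) / (Nat.factorial (2 * k + 2))
        + 2 * (Real.log (x / n)) ^ (2 * k + 1) / (Nat.factorial (2 * k + 1)))

noncomputable def V (x n : ℝ) (k : ℕ) : ℝ :=
  (Real.sqrt (n + 1) / 2) *
      ((Real.log (x / (n + 1))) ^ (2 * k + 2) / (Nat.factorial (2 * k + 2))
        + 2 * (Real.log (x / (n + 1))) ^ (2 * k + 1) / (Nat.factorial (2 * k + 1)))
    - (Real.log (x / (n + 1))) ^ (2 * k + 2) / (Nat.factorial (2 * k + 2) * 4 * Real.sqrt (n + 1))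



noncomputable def Faux (x : ℝ) (k : ℕ) (z : ℝ) : ℝ :=
  Real.sqrt z * ((Real.log (z / x)) ^ (2 * k + 1) / (Nat.factorial (2 * k + 1))
    - (Real.log (z / x)) ^ (2 * k + 2) / (2 * Nat.factorial (2 * k + 2)))

lemma hasDerivAt_Faux (x : ℝ) (hx : 0 < x) (k : ℕ) (z : ℝ) (hz : 0 < z) :
    HasDerivAt (Faux x k)
      ((Real.log (z / x)) ^ (2 * k) / (Nat.factorial (2 * k) * Real.sqrt z)
        - (Real.log (z / x)) ^ (2 * k + 2) / (Nat.factorial (2 * k + 2) * 4 * Real.sqrt z)) z := by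
  have hzx : z / x ≠ 0 := div_ne_zero hz.ne' hx.ne'
  have hL : HasDerivAt (fun z : ℝ => Real.log (z / x)) (1 / z) z := by
    have h1 : HasDerivAt (fun z : ℝ => z / x) (1 / x) z := (hasDerivAt_id z).div_const x
    have := h1.log hzx
    convert this using 1
    field_simp
  have hs : HasDerivAt Real.sqrt (1 / (2 * Real.sqrt z)) z := Real.hasDerivAt_sqrt hz.ne'
  have hP : HasDerivAt (fun z : ℝ => (Real.log (z / x)) ^ (2 * k + 1) / (Nat.factorial (2 * k + 1))
      - (Real.log (z / x)) ^ (2 * k + 2) / (2 * Nat.factorial (2 * k + 2)))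
      (((2 * k + 1 : ℕ) * (Real.log (z / x)) ^ (2 * k) * (1 / z)) / (Nat.factorial (2 * k + 1))
        - ((2 * k + 2 : ℕ) * (Real.log (z / x)) ^ (2 * k + 1) * (1 / z)) / (2 * Nat.factorial (2 * k + 2))) z :=
    ((hL.pow _).div_const _).sub ((hL.pow _).div_const _)
  have := hs.mul hP
  convert this using 1
  case e'_4 => rfl
  case e'_5 => rfl
  case e'_8 => rfl
  have hsz : Real.sqrt z ≠ 0 := (Real.sqrt_pos.mpr hz).ne'
  have hss : Real.sqrt z * Real.sqrt z = z := Real.mul_self_sqrt hz.le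
  have hf1 : ((2 * k + 1).factorial : ℝ) ≠ 0 := Nat.cast_ne_zero.mpr (Nat.factorial_ne_zero _)
  have hf2 : ((2 * k + 2).factorial : ℝ) ≠ 0 := Nat.cast_ne_zero.mpr (Nat.factorial_ne_zero _)
  have hf0 : ((2 * k).factorial : ℝ) ≠ 0 := Nat.cast_ne_zero.mpr (Nat.factorial_ne_zero _)
  have e1 : ((2 * k + 1).factorial : ℝ) = (2 * k + 1) * (2 * k).factorial := by
    rw [Nat.factorial_succ]; push_cast; ring
  have e2 : ((2 * k + 2).factorial : ℝ) = (2 * k + 2) * (2 * k + 1).factorial := by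
    rw [Nat.factorial_succ]; push_cast; ring
  rw [e2, e1]
  push_cast
  rw [show (1:ℝ)/z = 1/(Real.sqrt z * Real.sqrt z) by rw [hss]]
  have h1 : (2*(k:ℝ)+1) ≠ 0 := by positivity
  have h2 : (2*(k:ℝ)+2) ≠ 0 := by positivity
  field_simp
  ring_nf

theorem stmt_7 (n : ℕ) (hn : 1 ≤ n) (k : ℕ) (x : ℝ) (hx : 0 < x) :
    U x n k + V x n k
      = ((Real.log (n / x)) ^ (2 * k) / (Nat.factorial (2 * k) * Real.sqrt n)
          - ∫ z in (n : ℝ)..(n + 1),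
              (Real.log (z / x)) ^ (2 * k) / (Nat.factorial (2 * k) * Real.sqrt z))
        + ((∫ z in (n : ℝ)..(n + 1),
              (Real.log (z / x)) ^ (2 * k + 2) / (Nat.factorial (2 * k + 2) * 4 * Real.sqrt z))
          - (Real.log ((n + 1) / x)) ^ (2 * k + 2)
              / (Nat.factorial (2 * k + 2) * 4 * Real.sqrt (n + 1))) := by
  have hn0 : (0 : ℝ) < n := by exact_mod_cast Nat.lt_of_lt_of_le Nat.zero_lt_one hn
  have hmem : ∀ z ∈ Set.uIcc (n : ℝ) (n + 1), 0 < z := by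
    intro z hz
    rw [Set.uIcc_of_le (by linarith : (n:ℝ) ≤ n + 1)] at hz
    linarith [hz.1]
  have hcont : ∀ (m : ℕ) (c : ℝ), c ≠ 0 → ContinuousOn
      (fun z : ℝ => (Real.log (z / x)) ^ m / (c * Real.sqrt z)) (Set.uIcc (n : ℝ) (n + 1)) := by
    intro m c hc
    apply ContinuousOn.div
    · exact ((Real.continuousOn_log.comp (continuousOn_id.div_const x)
        (fun z hz => div_ne_zero (hmem z hz).ne' hx.ne')).pow m)
    · exact continuousOn_const.mul Real.continuous_sqrt.continuousOn
    · exact fun z hz => mul_ne_zero hc (Real.sqrt_pos.mpr (hmem z hz)).ne'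
  have hf0 : ((2 * k).factorial : ℝ) ≠ 0 := Nat.cast_ne_zero.mpr (Nat.factorial_ne_zero _)
  have hf2 : ((2 * k + 2).factorial : ℝ) * 4 ≠ 0 :=
    mul_ne_zero (Nat.cast_ne_zero.mpr (Nat.factorial_ne_zero _)) (by norm_num)
  have hint1 : IntervalIntegrable
      (fun z : ℝ => (Real.log (z / x)) ^ (2 * k) / (Nat.factorial (2 * k) * Real.sqrt z))
      MeasureTheory.volume (n : ℝ) (n + 1) := (hcont (2 * k) _ hf0).intervalIntegrable
  have hint2 : IntervalIntegrable
      (fun z : ℝ => (Real.log (z / x)) ^ (2 * k + 2)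
        / (Nat.factorial (2 * k + 2) * 4 * Real.sqrt z))
      MeasureTheory.volume (n : ℝ) (n + 1) := (hcont (2 * k + 2) _ hf2).intervalIntegrable
  have key : ∫ z in (n : ℝ)..(n + 1),
      ((Real.log (z / x)) ^ (2 * k) / (Nat.factorial (2 * k) * Real.sqrt z)
        - (Real.log (z / x)) ^ (2 * k + 2) / (Nat.factorial (2 * k + 2) * 4 * Real.sqrt z))
      = Faux x k (n + 1) - Faux x k n := by
    apply intervalIntegral.integral_eq_sub_of_hasDerivAt
    · exact fun z hz => hasDerivAt_Faux x hx k z (hmem z hz)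
    · exact hint1.sub hint2
  rw [intervalIntegral.integral_sub hint1 hint2] at key
  have l1 : Real.log ((n : ℝ) / x) = - Real.log (x / (n : ℝ)) := by
    rw [← Real.log_inv, inv_div]
  have l2 : Real.log (((n : ℝ) + 1) / x) = - Real.log (x / ((n : ℝ) + 1)) := by
    rw [← Real.log_inv, inv_div]
  have p1 : ∀ L : ℝ, (-L) ^ (2 * k) = L ^ (2 * k) := fun L => Even.neg_pow ⟨k, by ring⟩ L
  have p2 : ∀ L : ℝ, (-L) ^ (2 * k + 1) = -(L ^ (2 * k + 1)) := fun L =>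
    Odd.neg_pow ⟨k, by ring⟩ L
  have p3 : ∀ L : ℝ, (-L) ^ (2 * k + 2) = L ^ (2 * k + 2) := fun L =>
    Even.neg_pow ⟨k + 1, by ring⟩ L
  have halg : U x n k + V x n k
      = (Real.log ((n : ℝ) / x)) ^ (2 * k) / (Nat.factorial (2 * k) * Real.sqrt n)
        - (Real.log (((n : ℝ) + 1) / x)) ^ (2 * k + 2)
            / (Nat.factorial (2 * k + 2) * 4 * Real.sqrt ((n : ℝ) + 1))
        - (Faux x k ((n : ℝ) + 1) - Faux x k n) := by
    simp only [U, V, Faux, l1, l2, p1, p2, p3]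
    ring
  rw [halg, ← key]
  ring
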